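/- arXiv:1104.4006 — 2 statements merged into one kernel-verified Lean document; each statement's English description precedes it below -/
import Mathlib

section
/- Let A be an artin algebra with radical square zero that has no simple projective modules (e.g., A is cyclic-like). Then every simple A-module has infinite projective dimension. -/
open CategoryTheory

/-- The Jacobson radical of a ring, as a left ideal. -/
abbrev ringRadical (A : Type) [Ring A] : Ideal A := (⊥ : Ideal A).jacobson

/-- `A` has radical square zero. -/
def RadicalSquareZero (A : Type) [Ring A] : Prop :=
  ∀ a ∈ ringRadical A, ∀ b ∈ ringRadical A, a * b = 0

/-- A finitely generated module `S` has finite projective dimension: it admits a finite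
resolution `0 → P_n → ⋯ → P_1 → P_0 → S → 0` by finitely generated projective
modules. -/
def HasFiniteProjectiveDimension (A : Type) [Ring A] (S : ModuleCat.{0} A) : Prop :=
  ∃ (n : ℕ) (P : ℕ → ModuleCat.{0} A) (d : ∀ i : ℕ, P (i + 1) ⟶ P i) (ε : P 0 ⟶ S),
    (∀ i, Module.Projective A (P i)) ∧ (∀ i, Module.Finite A (P i)) ∧
    Function.Surjective ε ∧ Function.Exact (d 0) ε ∧
    (∀ i, Function.Exact (d (i + 1)) (d i)) ∧
    (∀ i, n < i → Limits.IsZero (P i))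

section Aux

variable {A : Type} [Ring A]

def ResLe (A : Type) [Ring A] (n : ℕ) (S : ModuleCat.{0} A) : Prop :=
  ∃ (P : ℕ → ModuleCat.{0} A) (d : ∀ i : ℕ, P (i + 1) ⟶ P i) (ε : P 0 ⟶ S),
    (∀ i, Module.Projective A (P i)) ∧ (∀ i, Module.Finite A (P i)) ∧
    Function.Surjective ε ∧ Function.Exact (d 0) ε ∧
    (∀ i, Function.Exact (d (i + 1)) (d i)) ∧
    (∀ i, n < i → Limits.IsZero (P i))

theorem subsingleton_of_isZero {M : ModuleCat.{0} A} (h : Limits.IsZero M) : Subsingleton M := by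
  constructor
  intro a b
  have h1 : (𝟙 M : M ⟶ M) = 0 := h.eq_of_src _ _
  have ha : a = (0 : M ⟶ M) a := by simpa using congrArg (fun f : M ⟶ M => f a) h1
  have hb : b = (0 : M ⟶ M) b := by simpa using congrArg (fun f : M ⟶ M => f b) h1
  rw [ha, hb]
  rfl

instance punit_projective : Module.Projective A PUnit := by
  refine Module.Projective.of_split (M := A) 0 0 ?_
  apply LinearMap.ext
  intro x
  exact Subsingleton.elim _ _

theorem exact_of_subsingleton {M N K : Type} [AddCommGroup M] [AddCommGroup N] [AddCommGroup K]
    [Module A M] [Module A N] [Module A K] [Subsingleton N]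
    (f : M →ₗ[A] N) (g : N →ₗ[A] K) : Function.Exact f g := by
  intro y
  constructor
  · intro _; exact ⟨0, Subsingleton.elim _ _⟩
  · intro _
    have : y = 0 := Subsingleton.elim _ _
    rw [this, map_zero]

/-- A f.g. projective module has a resolution of length `0 ≤ n`. -/
theorem resLe_of_projective (M : Type) [AddCommGroup M] [Module A M]
    (h1 : Module.Projective A M) (h2 : Module.Finite A M) (n : ℕ) :
    ResLe A n (ModuleCat.of A M) := by
  refine ⟨fun i => Nat.casesOn i (ModuleCat.of A M) (fun _ => ModuleCat.of A PUnit),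
    fun _ => 0, ModuleCat.ofHom LinearMap.id, ?_, ?_, ?_, ?_, ?_, ?_⟩
  · intro i; cases i with
    | zero => exact h1
    | succ j => exact punit_projective
  · intro i; cases i with
    | zero => exact h2
    | succ j => infer_instance
  · exact Function.surjective_id
  · rw [LinearMap.exact_iff]
    simp [LinearMap.ker_id]
  · intro i; cases i with
    | zero => exact exact_of_subsingleton _ _
    | succ j => exact exact_of_subsingleton _ _
  · intro i hi
    cases i with
    | zero => omega
    | succ j => exact ModuleCat.isZero_of_subsingleton _

/-- Transport a resolution along a linear equivalence. -/
theorem resLe_congr {n : ℕ} {S : ModuleCat.{0} A} {N : Type} [AddCommGroup N] [Module A N]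
    (h : ResLe A n S) (e : S ≃ₗ[A] N) : ResLe A n (ModuleCat.of A N) := by
  obtain ⟨P, d, ε, hproj, hfin, hsurj, hex0, hex, hzero⟩ := h
  refine ⟨P, d, ModuleCat.ofHom (e.toLinearMap.comp ε.hom : P 0 →ₗ[A] N), hproj, hfin,
    e.surjective.comp hsurj, ?_, hex, hzero⟩
  intro y
  rw [← hex0 y]
  constructor
  · intro hy
    apply e.injective
    rw [map_zero]
    exact hy
  · intro hy
    show e (ε y) = 0
    rw [hy, map_zero]

/-- `ResLe 0` implies projective. -/
theorem projective_of_resLe_zero {S : ModuleCat.{0} A} (h : ResLe A 0 S) :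
    Module.Projective A S := by
  obtain ⟨P, d, ε, hproj, hfin, hsurj, hex0, hex, hzero⟩ := h
  have hsub : Subsingleton (P 1) := subsingleton_of_isZero (hzero 1 (by omega))
  have hker : LinearMap.ker ε.hom = ⊥ := by
    rw [LinearMap.exact_iff] at hex0
    rw [hex0]
    rw [Submodule.eq_bot_iff]
    rintro x ⟨y, rfl⟩
    rw [Subsingleton.elim y 0, map_zero]
  have hbij : Function.Bijective ε := ⟨LinearMap.ker_eq_bot.1 hker, hsurj⟩
  exact Module.Projective.of_equiv (LinearEquiv.ofBijective ε.hom hbij)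

/-- finiteness from a resolution -/
theorem finite_of_resLe {n : ℕ} {S : ModuleCat.{0} A} (h : ResLe A n S) :
    Module.Finite A S := by
  obtain ⟨P, d, ε, hproj, hfin, hsurj, _, _, _⟩ := h
  exact Module.Finite.of_surjective ε.hom hsurj

/-- Truncation: the kernel of the augmentation has a resolution one shorter. -/
theorem resLe_trunc {n : ℕ} {S : ModuleCat.{0} A}
    (P : ℕ → ModuleCat.{0} A) (d : ∀ i : ℕ, P (i + 1) ⟶ P i) (ε : P 0 ⟶ S)
    (hproj : ∀ i, Module.Projective A (P i)) (hfin : ∀ i, Module.Finite A (P i))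
    (hex0 : Function.Exact (d 0) ε) (hex : ∀ i, Function.Exact (d (i + 1)) (d i))
    (hzero : ∀ i, n + 1 < i → Limits.IsZero (P i)) :
    ResLe A n (ModuleCat.of A (LinearMap.ker ε.hom)) := by
  have hmem : ∀ x : P 1, (d 0) x ∈ LinearMap.ker ε.hom := by
    intro x
    rw [LinearMap.mem_ker]
    exact (hex0 _).2 ⟨x, rfl⟩
  refine ⟨fun i => P (i + 1), fun i => d (i + 1),
    ModuleCat.ofHom (LinearMap.codRestrict _ (d 0).hom hmem), fun i => hproj _, fun i => hfin _,
    ?_, ?_, fun i => hex _, fun i hi => hzero _ (by omega)⟩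
  · rintro ⟨y, hy⟩
    rw [LinearMap.mem_ker] at hy
    obtain ⟨x, hx⟩ := (hex0 y).1 hy
    exact ⟨x, Subtype.ext hx⟩
  · intro y
    have h1 : LinearMap.codRestrict _ (d 0).hom hmem y = 0 ↔ (d 0) y = 0 := by
      constructor
      · intro hy; exact congrArg Subtype.val hy
      · intro hy; exact Subtype.ext hy
    exact h1.trans (hex 0 y)

/-- Add a finitely generated projective in degree 0. -/
theorem resLe_addProj {n : ℕ} {K : ModuleCat.{0} A} (h : ResLe A n K)
    (Q : Type) [AddCommGroup Q] [Module A Q]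
    (hq1 : Module.Projective A Q) (hq2 : Module.Finite A Q) :
    ResLe A n (ModuleCat.of A (K × Q)) := by
  obtain ⟨P, d, ε, hproj, hfin, hsurj, hex0, hex, hzero⟩ := h
  refine ⟨fun i => Nat.casesOn i (ModuleCat.of A (P 0 × Q)) (fun j => P (j + 1)),
    fun i => Nat.casesOn i
      (ModuleCat.ofHom (LinearMap.prod (d 0).hom 0 : P 1 →ₗ[A] (P 0 × Q)))
      (fun j => d (j + 1)),
    ModuleCat.ofHom (ε.hom.prodMap (LinearMap.id : Q →ₗ[A] Q) : (P 0 × Q) →ₗ[A] (K × Q)),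
    ?_, ?_, ?_, ?_, ?_, ?_⟩
  · intro i; cases i with
    | zero =>
      haveI := hproj 0
      haveI := hq1
      exact inferInstanceAs (Module.Projective A (↑(P 0) × Q))
    | succ j => exact hproj _
  · intro i; cases i with
    | zero =>
      haveI := hfin 0
      haveI := hq2
      exact inferInstanceAs (Module.Finite A (↑(P 0) × Q))
    | succ j => exact hfin _
  · rintro ⟨k, q⟩
    obtain ⟨p, hp⟩ := hsurj k
    refine ⟨(p, q), ?_⟩
    show (ε p, q) = (k, q)
    rw [hp]
  · rintro ⟨p, q⟩
    constructor
    · intro hy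
      have h1 : ε p = 0 := congrArg Prod.fst hy
      have h2 : q = 0 := congrArg Prod.snd hy
      obtain ⟨x, hx⟩ := (hex0 p).1 h1
      refine ⟨x, ?_⟩
      show ((d 0) x, (0 : Q)) = (p, q)
      rw [hx, h2]
    · rintro ⟨x, hx⟩
      have h1 : p = d 0 x := (congrArg Prod.fst hx).symm
      have h2 : q = 0 := (congrArg Prod.snd hx).symm
      subst h1; subst h2
      have : ε (d 0 x) = 0 := (hex0 _).2 ⟨x, rfl⟩
      show (ε ((d 0) x), (0 : Q)) = 0
      rw [this]
      rfl
  · intro i; cases i with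
    | zero =>
      intro y
      constructor
      · intro hy
        have h1 : d 0 y = 0 := congrArg Prod.fst hy
        exact (hex 0 y).1 h1
      · rintro ⟨x, hx⟩
        have : d 0 y = 0 := (hex 0 y).2 ⟨x, hx⟩
        show ((d 0) y, (0 : Q)) = 0
        rw [this]
        rfl
    | succ j => exact hex _
  · intro i hi; cases i with
    | zero => omega
    | succ j => exact hzero _ hi

/-- Prepend a cover to a resolution of its kernel. -/
theorem resLe_prepend {n : ℕ} {M : ModuleCat.{0} A} (Q : Type) [AddCommGroup Q] [Module A Q]
    (hq1 : Module.Projective A Q) (hq2 : Module.Finite A Q)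
    (f : Q →ₗ[A] M) (hf : Function.Surjective f)
    (h : ResLe A n (ModuleCat.of A (LinearMap.ker f))) :
    ResLe A (n + 1) M := by
  obtain ⟨P, d, ε, hproj, hfin, hsurj, hex0, hex, hzero⟩ := h
  refine ⟨fun i => Nat.casesOn i (ModuleCat.of A Q) (fun j => P j),
    fun i => Nat.casesOn i
      (ModuleCat.ofHom ((LinearMap.ker f).subtype.comp ε.hom : P 0 →ₗ[A] Q))
      (fun j => d j),
    ModuleCat.ofHom f, ?_, ?_, hf, ?_, ?_, ?_⟩
  · intro i; cases i with
    | zero => exact hq1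
    | succ j => exact hproj _
  · intro i; cases i with
    | zero => exact hq2
    | succ j => exact hfin _
  · intro y
    constructor
    · intro hy
      obtain ⟨x, hx⟩ := hsurj ⟨y, LinearMap.mem_ker.2 hy⟩
      refine ⟨x, ?_⟩
      show ((LinearMap.ker f).subtype) (ε x) = y
      rw [hx]
      rfl
    · rintro ⟨x, hx⟩
      rw [← hx]
      exact (ε x).2
  · intro i; cases i with
    | zero =>
      intro y
      constructor
      · intro hy
        have h1 : ε y = 0 := by
          apply Subtype.ext
          exact hy
        exact (hex0 y).1 h1
      · rintro ⟨x, hx⟩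
        have h1 : ε y = 0 := (hex0 y).2 ⟨x, hx⟩
        show ((LinearMap.ker f).subtype) (ε y) = 0
        rw [h1, map_zero]
    | succ j => exact hex _
  · intro i hi; cases i with
    | zero => omega
    | succ j => exact hzero _ (by omega)

/-- Schanuel's lemma. -/
theorem schanuel {M P Q : Type} [AddCommGroup M] [Module A M] [AddCommGroup P] [Module A P]
    [AddCommGroup Q] [Module A Q] (hP : Module.Projective A P) (hQ : Module.Projective A Q)
    (ε : P →ₗ[A] M) (f : Q →ₗ[A] M) (hε : Function.Surjective ε) (hf : Function.Surjective f) :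
    Nonempty ((LinearMap.ker f × P) ≃ₗ[A] (LinearMap.ker ε × Q)) := by
  obtain ⟨σ, hσ⟩ := Module.projective_lifting_property (R := A) f ε hf
  obtain ⟨τ, hτ⟩ := Module.projective_lifting_property (R := A) ε f hε
  have hσ' : ∀ p : P, f (σ p) = ε p := fun p => DFunLike.congr_fun hσ p
  have hτ' : ∀ q : Q, ε (τ q) = f q := fun q => DFunLike.congr_fun hτ q
  set g : (P × Q) →ₗ[A] M :=
    (ε.comp (LinearMap.fst A P Q)) - (f.comp (LinearMap.snd A P Q)) with hg
  have hgmem : ∀ w : P × Q, w ∈ LinearMap.ker g ↔ ε w.1 = f w.2 := by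
    intro w
    rw [LinearMap.mem_ker, hg]
    simp [sub_eq_zero]
  let e1 : (LinearMap.ker f × P) ≃ₗ[A] LinearMap.ker g :=
    { toFun := fun z => ⟨(z.2, σ z.2 + (z.1 : Q)), by
        rw [hgmem]
        have h1 : f (z.1 : Q) = 0 := z.1.2
        simp [map_add, hσ' z.2, h1]⟩
      invFun := fun w => (⟨w.1.2 - σ w.1.1, by
        have h1 : ε w.1.1 = f w.1.2 := (hgmem w.1).1 w.2
        simp [LinearMap.mem_ker, map_sub, hσ' w.1.1, h1]⟩, w.1.1)
      map_add' := by
        intro a b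
        apply Subtype.ext
        apply Prod.ext
        · rfl
        · show σ (a.2 + b.2) + ((a.1 : Q) + (b.1 : Q)) = (σ a.2 + a.1) + (σ b.2 + b.1)
          rw [map_add]
          abel
      map_smul' := by
        intro c a
        apply Subtype.ext
        apply Prod.ext
        · rfl
        · show σ (c • a.2) + (c • (a.1 : Q)) = c • (σ a.2 + a.1)
          rw [map_smul, smul_add]
      left_inv := by
        intro z
        apply Prod.ext
        · apply Subtype.ext
          show σ z.2 + (z.1 : Q) - σ z.2 = (z.1 : Q)
          abel
        · rfl
      right_inv := by
        intro w
        apply Subtype.ext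
        apply Prod.ext
        · rfl
        · show σ w.1.1 + (w.1.2 - σ w.1.1) = w.1.2
          abel }
  let e2 : LinearMap.ker g ≃ₗ[A] (LinearMap.ker ε × Q) :=
    { toFun := fun w => (⟨w.1.1 - τ w.1.2, by
        have h1 : ε w.1.1 = f w.1.2 := (hgmem w.1).1 w.2
        simp [LinearMap.mem_ker, map_sub, hτ' w.1.2, h1]⟩, w.1.2)
      invFun := fun z => ⟨(τ z.2 + (z.1 : P), z.2), by
        rw [hgmem]
        have h1 : ε (z.1 : P) = 0 := z.1.2
        simp [map_add, hτ' z.2, h1]⟩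
      map_add' := by
        intro a b
        apply Prod.ext
        · apply Subtype.ext
          show (a.1.1 + b.1.1) - τ (a.1.2 + b.1.2) = (a.1.1 - τ a.1.2) + (b.1.1 - τ b.1.2)
          rw [map_add]
          abel
        · rfl
      map_smul' := by
        intro c a
        apply Prod.ext
        · apply Subtype.ext
          show (c • a.1.1) - τ (c • a.1.2) = c • (a.1.1 - τ a.1.2)
          rw [map_smul, smul_sub]
        · rfl
      left_inv := by
        intro w
        apply Subtype.ext
        apply Prod.ext
        · show τ w.1.2 + (w.1.1 - τ w.1.2) = w.1.1
          abel
        · rfl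
      right_inv := by
        intro z
        apply Prod.ext
        · apply Subtype.ext
          show (τ z.2 + (z.1 : P)) - τ z.2 = (z.1 : P)
          abel
        · rfl }
  exact ⟨e1.trans e2⟩

/-- product of submodules as product type -/
def submoduleProdEquiv {M N : Type} [AddCommGroup M] [Module A M] [AddCommGroup N] [Module A N]
    (p : Submodule A M) (q : Submodule A N) :
    (Submodule.prod p q : Submodule A (M × N)) ≃ₗ[A] (p × q) :=
  { toFun := fun z => (⟨z.1.1, z.2.1⟩, ⟨z.1.2, z.2.2⟩)
    invFun := fun z => ⟨((z.1 : M), (z.2 : N)), ⟨z.1.2, z.2.2⟩⟩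
    map_add' := fun a b => rfl
    map_smul' := fun c a => rfl
    left_inv := fun z => rfl
    right_inv := fun z => rfl }

/-- A direct factor of a module with a finite resolution has a finite resolution
of the same length. -/
theorem resLe_of_prod : ∀ (n : ℕ) (M N : Type) (_ : AddCommGroup M) (_ : Module A M)
    (_ : AddCommGroup N) (_ : Module A N),
    ResLe A n (ModuleCat.of A (M × N)) → ResLe A n (ModuleCat.of A M) := by
  intro n
  induction n with
  | zero =>
    intro M N _ _ _ _ h
    haveI hp : Module.Projective A (M × N) := projective_of_resLe_zero h
    haveI hf : Module.Finite A (M × N) := finite_of_resLe h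
    have hpM : Module.Projective A M :=
      Module.Projective.of_split (LinearMap.inl A M N) (LinearMap.fst A M N) (by ext x <;> rfl)
    have hfM : Module.Finite A M :=
      Module.Finite.of_surjective (LinearMap.fst A M N) Prod.fst_surjective
    exact resLe_of_projective M hpM hfM 0
  | succ n ih =>
    intro M N _ _ _ _ h
    haveI hfMN : Module.Finite A (M × N) := finite_of_resLe h
    have hfM : Module.Finite A M :=
      Module.Finite.of_surjective (LinearMap.fst A M N) Prod.fst_surjective
    have hfN : Module.Finite A N :=
      Module.Finite.of_surjective (LinearMap.snd A M N) Prod.snd_surjective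
    obtain ⟨k, gM, hgM⟩ := Module.Finite.exists_fin' A M
    obtain ⟨l, gN, hgN⟩ := Module.Finite.exists_fin' A N
    set g : ((Fin k → A) × (Fin l → A)) →ₗ[A] (M × N) := gM.prodMap gN with hgdef
    have hg : Function.Surjective g := by
      rintro ⟨m, nn⟩
      obtain ⟨x, hx⟩ := hgM m
      obtain ⟨y, hy⟩ := hgN nn
      exact ⟨(x, y), by simp [hgdef, LinearMap.prodMap_apply, hx, hy]⟩
    obtain ⟨P, d, ε, hproj, hfin, hsurj, hex0, hex, hzero⟩ := h
    have htr : ResLe A n (ModuleCat.of A (LinearMap.ker ε.hom)) :=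
      resLe_trunc P d ε hproj hfin hex0 hex hzero
    have h2 : ResLe A n (ModuleCat.of A
        ((LinearMap.ker ε.hom) × ((Fin k → A) × (Fin l → A)))) :=
      resLe_addProj htr _ inferInstance inferInstance
    obtain ⟨e⟩ := schanuel (hproj 0) (inferInstance : Module.Projective A ((Fin k → A) × (Fin l → A)))
      ε.hom g hsurj hg
    have h3 : ResLe A n (ModuleCat.of A ((LinearMap.ker g) × (P 0))) :=
      resLe_congr h2 e.symm
    have e2 : (LinearMap.ker g) ≃ₗ[A] ((LinearMap.ker gM) × (LinearMap.ker gN)) :=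
      (LinearEquiv.ofEq _ _ (LinearMap.ker_prodMap gM gN)).trans
        (submoduleProdEquiv (LinearMap.ker gM) (LinearMap.ker gN))
    have e3 : ((LinearMap.ker g) × (P 0)) ≃ₗ[A]
        ((LinearMap.ker gM) × ((LinearMap.ker gN) × (P 0))) :=
      (e2.prodCongr (LinearEquiv.refl A (P 0))).trans
        (LinearEquiv.prodAssoc A _ _ _)
    have h4 := resLe_congr h3 e3
    have h5 := ih (LinearMap.ker gM) ((LinearMap.ker gN) × (P 0)) _ _ _ _ h4
    exact resLe_prepend (M := ModuleCat.of A M) _ inferInstance inferInstance gM hgM h5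


section RingTheory

/-- The Jacobson radical annihilates every simple module. -/
theorem jacobson_smul_simple {V : Type} [AddCommGroup V] [Module A V]
    (hV : IsSimpleModule A V) {j : A} (hj : j ∈ ringRadical A) (v : V) : j • v = 0 := by
  by_cases hv : v = 0
  · rw [hv, smul_zero]
  · have hsurj : Function.Surjective (LinearMap.toSpanSingleton A V v) := by
      rw [← LinearMap.range_eq_top, ← LinearMap.span_singleton_eq_range]
      rcases hV.1.2 (A ∙ v) with h | h
      · exfalso
        apply hv
        have hm := Submodule.mem_span_singleton_self (R := A) v
        rw [h] at hm
        simpa using hm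
      · exact h
    have hco : IsCoatom (LinearMap.ker (LinearMap.toSpanSingleton A V v)) :=
      LinearMap.isCoatom_ker_of_surjective hsurj
    have hmax : Ideal.IsMaximal (LinearMap.ker (LinearMap.toSpanSingleton A V v)) :=
      Ideal.isMaximal_def.2 hco
    have hle : ringRadical A ≤ LinearMap.ker (LinearMap.toSpanSingleton A V v) :=
      sInf_le ⟨bot_le, hmax⟩
    exact hle hj

variable [IsArtinianRing A]

/-- Over an artinian ring, the Jacobson radical is a finite intersection of
maximal left ideals. -/
theorem exists_finset_jacobson :
    ∃ s : Finset (Ideal A), (∀ m ∈ s, m.IsMaximal) ∧ ringRadical A = s.inf id := by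
  classical
  have hart : IsArtinian A A := ‹IsArtinianRing A›
  set 𝒮 : Set (Ideal A) :=
    {I | ∃ s : Finset (Ideal A), (∀ m ∈ s, m.IsMaximal) ∧ I = s.inf id} with h𝒮
  obtain ⟨N, hN, hmin⟩ := IsArtinian.set_has_minimal 𝒮 ⟨⊤, ∅, by simp, by simp⟩
  obtain ⟨s, hs, rfl⟩ := hN
  refine ⟨s, hs, le_antisymm ?_ ?_⟩
  · exact Finset.le_inf fun m hm => sInf_le ⟨bot_le, hs m hm⟩
  · have hle : ∀ m : Ideal A, m.IsMaximal → s.inf id ≤ m := by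
      intro m hm
      have hmem : s.inf id ⊓ m ∈ 𝒮 := by
        refine ⟨insert m s, ?_, ?_⟩
        · intro m' hm'
          rcases Finset.mem_insert.1 hm' with h | h
          · exact h ▸ hm
          · exact hs m' h
        · rw [Finset.inf_insert]
          rw [inf_comm]
          rfl
      have := hmin _ hmem
      have heq : s.inf id ⊓ m = s.inf id := by
        rcases lt_or_eq_of_le (inf_le_left : s.inf id ⊓ m ≤ s.inf id) with h | h
        · exact absurd h (hmin _ hmem)
        · exact h
      rw [← heq]
      exact inf_le_right
    exact le_sInf fun m hm => hle m hm.2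

/-- Finite products of semisimple modules are semisimple. -/
theorem pi_isSemisimple {ι : Type} [Fintype ι] [DecidableEq ι] (V : ι → Type)
    [∀ i, AddCommGroup (V i)] [∀ i, Module A (V i)]
    (h : ∀ i, IsSemisimpleModule A (V i)) : IsSemisimpleModule A (∀ i, V i) := by
  refine isSemisimpleModule_of_isSemisimpleModule_submodule'
    (p := fun i => LinearMap.range (LinearMap.single A V i)) (fun i => ?_) ?_
  · haveI := h i
    exact IsSemisimpleModule.range _
  · rw [eq_top_iff]
    intro x _
    have hx : x = ∑ i, Pi.single i (x i) := by
      rw [Finset.univ_sum_single]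
    rw [hx]
    apply Submodule.sum_mem
    intro i _
    apply Submodule.mem_iSup_of_mem i
    exact ⟨x i, rfl⟩

set_option maxHeartbeats 1000000 in
/-- The quotient by the radical is semisimple. -/
theorem quot_radical_isSemisimple : IsSemisimpleModule A (A ⧸ ringRadical A) := by
  classical
  obtain ⟨s, hs, hJ⟩ := exists_finset_jacobson (A := A)
  haveI : ∀ m : s, IsSimpleModule A (A ⧸ (m : Ideal A)) := fun m =>
    isSimpleModule_iff_isCoatom.2 (Ideal.isMaximal_def.1 (hs m m.2))
  set Φ : A →ₗ[A] (∀ m : s, A ⧸ (m : Ideal A)) :=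
    LinearMap.pi (fun m => (m : Ideal A).mkQ) with hΦ
  have hker : LinearMap.ker Φ = ringRadical A := by
    rw [hΦ, LinearMap.ker_pi]
    simp_rw [Submodule.ker_mkQ]
    rw [hJ]
    apply le_antisymm
    · apply Finset.le_inf
      intro m hm
      exact iInf_le _ (⟨m, hm⟩ : s)
    · apply le_iInf
      rintro ⟨m, hm⟩
      exact Finset.inf_le hm
  set Φq : (A ⧸ ringRadical A) →ₗ[A] (∀ m : s, A ⧸ (m : Ideal A)) :=
    (ringRadical A).liftQ Φ hker.ge with hΦq
  have hinj : Function.Injective Φq := by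
    rw [← LinearMap.ker_eq_bot]
    exact Submodule.ker_liftQ_eq_bot _ _ _ hker.le
  haveI hss : IsSemisimpleModule A (∀ m : s, A ⧸ (m : Ideal A)) :=
    pi_isSemisimple _ (fun m => inferInstance)
  haveI : IsSemisimpleModule A (LinearMap.range Φq) :=
    IsSemisimpleModule.submodule A (∀ m : s, A ⧸ (m : Ideal A))
  exact IsSemisimpleModule.congr (M := ↥(LinearMap.range Φq)) (LinearEquiv.ofInjective Φq hinj)

/-- A module annihilated by the radical is semisimple. -/
theorem isSemisimple_of_radical_smul_zero {V : Type} [AddCommGroup V] [Module A V]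
    (hann : ∀ j ∈ ringRadical A, ∀ v : V, j • v = 0) : IsSemisimpleModule A V := by
  haveI := quot_radical_isSemisimple (A := A)
  refine isSemisimpleModule_of_isSemisimpleModule_submodule'
    (p := fun v : V => LinearMap.range (LinearMap.toSpanSingleton A V v)) (fun v => ?_) ?_
  · have hle : ringRadical A ≤ LinearMap.ker (LinearMap.toSpanSingleton A V v) := by
      intro j hj
      exact hann j hj v
    set φq : (A ⧸ ringRadical A) →ₗ[A] V :=
      (ringRadical A).liftQ (LinearMap.toSpanSingleton A V v) hle with hφq
    have hr : LinearMap.range φq = LinearMap.range (LinearMap.toSpanSingleton A V v) :=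
      Submodule.range_liftQ _ _ _
    have h1 : IsSemisimpleModule A (LinearMap.range φq) := IsSemisimpleModule.range _
    rw [hr] at h1
    exact h1
  · rw [eq_top_iff]
    intro v _
    apply Submodule.mem_iSup_of_mem v
    exact ⟨1, one_smul _ _⟩

end RingTheory

section Idempotent

/-- Right multiplication as a left-module endomorphism. -/
def rmul (e : A) : A →ₗ[A] A where
  toFun a := a * e
  map_add' a b := add_mul a b e
  map_smul' c a := by simp [smul_eq_mul, mul_assoc]

theorem rmul_apply (e a : A) : rmul e a = a * e := rfl

variable [IsArtinianRing A]

/-- Construction of a minimal projective presentation of a simple module over a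
radical-square-zero ring. -/
theorem key_construction (hrad : ∀ a ∈ ringRadical A, ∀ b ∈ ringRadical A, a * b = 0)
    (T : Type) [AddCommGroup T] [Module A T] (hT : IsSimpleModule A T) :
    ∃ (P : Submodule A A) (π : ↥P →ₗ[A] T),
      Module.Projective A ↥P ∧ Module.Finite A ↥P ∧ Function.Surjective π ∧
      (∀ z : ↥(LinearMap.ker π), ((z : ↥P) : A) ∈ ringRadical A) := by
  classical
  haveI := IsSimpleModule.nontrivial A T
  obtain ⟨t₀, ht₀⟩ := exists_ne (0 : T)
  set ψ : A →ₗ[A] T := LinearMap.toSpanSingleton A T t₀ with hψ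
  have hψs : Function.Surjective ψ := by
    rw [← LinearMap.range_eq_top, hψ, ← LinearMap.span_singleton_eq_range]
    rcases hT.1.2 (A ∙ t₀) with h | h
    · exfalso
      apply ht₀
      have hm := Submodule.mem_span_singleton_self (R := A) t₀
      rw [h] at hm
      simpa using hm
    · exact h
  set m : Submodule A A := LinearMap.ker ψ with hm
  have hJm : ringRadical A ≤ m := by
    intro j hj
    rw [hm, LinearMap.mem_ker]
    exact jacobson_smul_simple hT hj t₀
  set J := ringRadical A with hJdef
  set ψq : (A ⧸ J) →ₗ[A] T := J.liftQ ψ hJm with hψq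
  haveI := quot_radical_isSemisimple (A := A)
  obtain ⟨Cq, hCq⟩ := exists_isCompl (LinearMap.ker ψq)
  set C' : Submodule A A := Cq.comap J.mkQ with hC'
  have hmker : m = (LinearMap.ker ψq).comap J.mkQ := by
    rw [← LinearMap.ker_comp, Submodule.liftQ_mkQ]
  have hinf : m ⊓ C' = J := by
    rw [hmker, hC', ← Submodule.comap_inf, disjoint_iff.1 hCq.disjoint]
    exact Submodule.ker_mkQ J
  have hsup : m ⊔ C' = ⊤ := by
    rw [eq_top_iff]
    intro x _
    have hx : J.mkQ x ∈ (LinearMap.ker ψq) ⊔ Cq := by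
      rw [codisjoint_iff.1 hCq.codisjoint]
      trivial
    obtain ⟨y, hy, z, hz, hyz⟩ := Submodule.mem_sup.1 hx
    obtain ⟨z', hz'⟩ := Submodule.mkQ_surjective J z
    have hz'C : z' ∈ C' := by
      rw [hC', Submodule.mem_comap, hz']
      exact hz
    have hxz : x - z' ∈ m := by
      rw [hmker, Submodule.mem_comap, map_sub, hz', ← hyz]
      simpa using hy
    have : x = (x - z') + z' := by abel
    rw [this]
    exact Submodule.add_mem_sup hxz hz'C
  have h1mem : (1 : A) ∈ m ⊔ C' := hsup ▸ trivial
  obtain ⟨f, hf, x₀, hx₀, hfx⟩ := Submodule.mem_sup.1 h1mem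
  set r : A := x₀ * x₀ - x₀ with hrdef
  have hrm : r ∈ m := by
    have h1 : x₀ - 1 = -f := by
      rw [← hfx]; abel
    have : r = x₀ • (x₀ - 1) := by
      rw [hrdef, smul_eq_mul, mul_sub, mul_one]
    rw [this, h1]
    exact m.smul_mem x₀ (m.neg_mem hf)
  have hrC : r ∈ C' := by
    have : r = x₀ • x₀ - x₀ := by rw [hrdef, smul_eq_mul]
    rw [this]
    exact C'.sub_mem (C'.smul_mem x₀ hx₀) hx₀
  have hrJ : r ∈ J := by
    rw [← hinf]
    exact ⟨hrm, hrC⟩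
  set e : A := 3 * x₀ ^ 2 - 2 * x₀ ^ 3 with hedef
  have hee : e * e = e := by
    have hid : e * e - e = ((4 * x₀ ^ 2 - 4 * x₀ - 3) * r) * r := by
      rw [hedef, hrdef]
      noncomm_ring
    have h0 : ((4 * x₀ ^ 2 - 4 * x₀ - 3) * r) * r = 0 := by
      apply hrad
      · exact J.smul_mem _ hrJ
      · exact hrJ
    have := hid.trans h0
    rwa [sub_eq_zero] at this
  have hexJ : e - x₀ ∈ J := by
    have hid : e - x₀ = (1 - 2 * x₀) * r := by
      rw [hedef, hrdef]
      noncomm_ring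
    rw [hid]
    exact J.smul_mem _ hrJ
  have heC : e ∈ C' := by
    have : e = x₀ + (e - x₀) := by abel
    rw [this]
    exact C'.add_mem hx₀ ((hinf ▸ hexJ).2)
  set P : Submodule A A := LinearMap.range (rmul e) with hPdef
  have hPproj : Module.Projective A ↥P := by
    refine Module.Projective.of_split P.subtype
      (LinearMap.codRestrict P (rmul e) (fun a => ⟨a, rfl⟩)) ?_
    apply LinearMap.ext
    rintro ⟨w, hw⟩
    obtain ⟨a, rfl⟩ := hw
    apply Subtype.ext
    show (a * e) * e = a * e
    rw [mul_assoc, hee]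
  have hPfin : Module.Finite A ↥P :=
    Module.Finite.of_surjective (rmul e).rangeRestrict (LinearMap.surjective_rangeRestrict _)
  set π : ↥P →ₗ[A] T := ψ.comp P.subtype with hπdef
  have hψe : ψ e = t₀ := by
    have h1 : ψ x₀ = t₀ := by
      have : ψ f + ψ x₀ = ψ 1 := by rw [← map_add, hfx]
      have hψf : ψ f = 0 := hf
      have hψ1 : ψ (1 : A) = t₀ := by
        rw [hψ]
        exact one_smul A t₀
      rw [hψf, zero_add] at this
      rw [this, hψ1]
    have h2 : ψ (e - x₀) = 0 := hJm hexJ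
    have : ψ e = ψ (e - x₀) + ψ x₀ := by rw [← map_add]; congr 1; abel
    rw [this, h2, zero_add, h1]
  have hπs : Function.Surjective π := by
    rw [← LinearMap.range_eq_top]
    rcases hT.1.2 (LinearMap.range π) with h | h
    · exfalso
      apply ht₀
      have : π ⟨e, ⟨1, one_mul e⟩⟩ = t₀ := by
        rw [hπdef]
        exact hψe
      have ht : t₀ ∈ LinearMap.range π := ⟨_, this⟩
      rw [h] at ht
      simpa using ht
    · exact h
  refine ⟨P, π, hPproj, hPfin, hπs, ?_⟩
  rintro ⟨⟨w, hwP⟩, hwk⟩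
  obtain ⟨a, ha⟩ := hwP
  have hwm : w ∈ m := by
    rw [hm, LinearMap.mem_ker]
    exact hwk
  have hwC : w ∈ C' := by
    rw [← ha]
    show a • e ∈ C'
    exact C'.smul_mem a heC
  show w ∈ J
  rw [← hinf]
  exact ⟨hwm, hwC⟩

end Idempotent


end Aux

/-- Let `A` be an artin algebra with radical square zero having no simple
projective modules (e.g. `A` cyclic-like).  Then every simple `A`-module has infinite
projective dimension. -/
theorem simple_infinite_projDim_of_radicalSquareZero
    (R A : Type) [CommRing R] [IsArtinianRing R] [Ring A] [Algebra R A]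
    [Module.Finite R A] (hrad : RadicalSquareZero A)
    (hnsp : ∀ (S : Type) [AddCommGroup S] [Module A S],
      IsSimpleModule A S → ¬ Module.Projective A S)
    (S : ModuleCat.{0} A) (hS : IsSimpleModule A S) :
    ¬ HasFiniteProjectiveDimension A S := by
  have hrad' : ∀ a ∈ ringRadical A, ∀ b ∈ ringRadical A, a * b = 0 := hrad
  classical
  intro hfin
  haveI hSnt : Nontrivial S := IsSimpleModule.nontrivial A S
  haveI : IsArtinianRing A := IsArtinianRing.of_finite R A
  set p : ℕ → Prop := fun n => ∃ (V : Type) (_ : AddCommGroup V) (_ : Module A V),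
      Nontrivial V ∧ (∀ j ∈ ringRadical A, ∀ v : V, j • v = 0) ∧
      ResLe A n (ModuleCat.of A V) with hpdef
  have hp0 : ∃ n, p n := by
    obtain ⟨n, P, d, ε, h1, h2, h3, h4, h5, h6⟩ := hfin
    refine ⟨n, ↑S, inferInstance, inferInstance, hSnt, ?_, ?_⟩
    · intro j hj v
      exact jacobson_smul_simple hS hj v
    · exact ⟨P, d, ε, h1, h2, h3, h4, h5, h6⟩
  set n₀ := Nat.find hp0 with hn₀
  obtain ⟨V, _, _, hVnt, hVann, hVres⟩ := Nat.find_spec hp0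
  haveI hVss : IsSemisimpleModule A V := isSemisimple_of_radical_smul_zero hVann
  have hTex : ∃ T : Submodule A V, IsSimpleModule A ↥T := by
    by_contra hcon
    push_neg at hcon
    have hsup := IsSemisimpleModule.sSup_simples_eq_top A V
    have hempty : {m : Submodule A V | IsSimpleModule A ↥m} = ∅ := by
      rw [Set.eq_empty_iff_forall_notMem]
      exact fun m hm => hcon m hm
    rw [hempty, sSup_empty] at hsup
    exact absurd hsup bot_ne_top
  obtain ⟨T, hTsimple⟩ := hTex
  obtain ⟨C, hC⟩ := exists_isCompl T
  have eVT : (↥T × ↥C) ≃ₗ[A] V := Submodule.prodEquivOfIsCompl T C hC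
  have hres2 : ResLe A n₀ (ModuleCat.of A (↥T × ↥C)) := resLe_congr hVres eVT.symm
  have hresT : ResLe A n₀ (ModuleCat.of A ↥T) := resLe_of_prod n₀ ↥T ↥C _ _ _ _ hres2
  rcases Nat.eq_zero_or_eq_succ_pred n₀ with h0 | hsucc
  · rw [h0] at hresT
    have hproj : Module.Projective A ↥T := projective_of_resLe_zero hresT
    exact hnsp ↥T hTsimple hproj
  · set n' := n₀ - 1 with hn'
    rw [hsucc] at hresT
    obtain ⟨P, π, hPproj, hPfin, hπs, hkerJ⟩ := key_construction hrad' ↥T hTsimple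
    by_cases hK : LinearMap.ker π = ⊥
    · have hbij : Function.Bijective π := ⟨LinearMap.ker_eq_bot.1 hK, hπs⟩
      haveI := hPproj
      have hproj : Module.Projective A ↥T :=
        Module.Projective.of_equiv (LinearEquiv.ofBijective π hbij)
      exact hnsp ↥T hTsimple hproj
    · obtain ⟨Pc, d, ε, hproj, hfin2, hsurj, hex0, hex, hzero⟩ := hresT
      obtain ⟨e⟩ := schanuel (hproj 0) hPproj ε.hom π hsurj hπs
      have h1 : ResLe A n' (ModuleCat.of A ↥(LinearMap.ker ε.hom)) :=
        resLe_trunc Pc d ε hproj hfin2 hex0 hex hzero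
      have h2 : ResLe A n' (ModuleCat.of A
          (↥(LinearMap.ker ε.hom) × ↥P)) :=
        resLe_addProj h1 ↥P hPproj hPfin
      have h3 : ResLe A n' (ModuleCat.of A (↥(LinearMap.ker π) × ↑(Pc 0))) :=
        resLe_congr h2 e.symm
      have h4 : ResLe A n' (ModuleCat.of A ↥(LinearMap.ker π)) :=
        resLe_of_prod n' _ _ _ _ _ _ h3
      have hann : ∀ j ∈ ringRadical A, ∀ z : ↥(LinearMap.ker π), j • z = 0 := by
        intro j hj z
        have hz : ((z : ↥P) : A) ∈ ringRadical A := hkerJ z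
        have hmul : j * ((z : ↥P) : A) = 0 := hrad' j hj _ hz
        apply Subtype.ext
        apply Subtype.ext
        show j • ((z : ↥P) : A) = 0
        rw [smul_eq_mul, hmul]
      haveI hKnt : Nontrivial ↥(LinearMap.ker π) :=
        Submodule.nontrivial_iff_ne_bot.2 hK
      have hpn' : p n' := ⟨↥(LinearMap.ker π), inferInstance, inferInstance, hKnt, hann, h4⟩
      have hlt : n' < n₀ := by omega
      exact absurd hpn' (Nat.find_min hp0 hlt)
end

section
/- Let A be an artin algebra with radical square zero and no simple projective modules. Then for each i ≥ 0, the algebra homomorphism End_{A/r}(r^{⊗i}) → End_{A/r}(r^{⊗(i+1)}) induced by applying the functor r ⊗_{A/r} − is injective. -/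
open CategoryTheory

/-- A realization of the tower of tensor powers `r^{⊗ i}` of the radical `r` of `A`
over `A/r`.  `T i` realizes `r^{⊗ i}` (an `A/r`-module, viewed as an `A`-module killed
by `r`), `β i : r → T i → T (i+1)` realizes the canonical balanced map
`r × r^{⊗ i} → r^{⊗ (i+1)}`, and `stepH a b` realizes the map
`Hom_{A/r}(r^{⊗ a}, r^{⊗ b}) → Hom_{A/r}(r^{⊗ (a+1)}, r^{⊗ (b+1)})`, `f ↦ id_r ⊗ f`,
induced by the functor `r ⊗_{A/r} −`. -/
structure RadTensorTower (A : Type) [Ring A] where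
  T : ℕ → ModuleCat.{0} A
  radkill : ∀ i, ∀ a ∈ ringRadical A, ∀ x : T i, a • x = 0
  iso0 : Nonempty ((A ⧸ ringRadical A) ≃ₗ[A] T 0)
  β : ∀ i, ringRadical A → T i → T (i + 1)
  β_add_left : ∀ i x y m, β i (x + y) m = β i x m + β i y m
  β_add_right : ∀ i x m m', β i x (m + m') = β i x m + β i x m'
  β_balanced : ∀ i (x : A) (hx : x ∈ ringRadical A) (a : A)
      (hxa : x * a ∈ ringRadical A) (m : T i),
      β i ⟨x * a, hxa⟩ m = β i ⟨x, hx⟩ (a • m)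
  β_smul : ∀ i (a : A) (x : ringRadical A) (m : T i), β i (a • x) m = a • β i x m
  β_universal : ∀ i (U : Type) [AddCommGroup U] (γ : ringRadical A → T i → U),
      (∀ x y m, γ (x + y) m = γ x m + γ y m) →
      (∀ x m m', γ x (m + m') = γ x m + γ x m') →
      (∀ (x : A) (hx : x ∈ ringRadical A) (a : A) (hxa : x * a ∈ ringRadical A) m,
        γ ⟨x * a, hxa⟩ m = γ ⟨x, hx⟩ (a • m)) →
      ∃! h : T (i + 1) →+ U, ∀ x m, h (β i x m) = γ x m
  stepH : ∀ a b, (T a →ₗ[A] T b) → (T (a + 1) →ₗ[A] T (b + 1))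
  stepH_spec : ∀ a b (f : T a →ₗ[A] T b) (x : ringRadical A) (m : T a),
      stepH a b f (β a x m) = β b x (f m)
  stepH_add : ∀ a b (f g : T a →ₗ[A] T b), stepH a b (f + g) = stepH a b f + stepH a b g
  stepH_id : ∀ a, stepH a a LinearMap.id = LinearMap.id
  stepH_comp : ∀ a b c (f : T a →ₗ[A] T b) (g : T b →ₗ[A] T c),
      stepH a c (g ∘ₗ f) = stepH b c g ∘ₗ stepH a b f

namespace RadTensorTower

variable {A : Type} [Ring A] (D : RadTensorTower A)

/-- Iteration of the maps `f ↦ id_r ⊗ f`. -/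
def stepHIter (a b : ℕ) : ∀ m : ℕ, (D.T a →ₗ[A] D.T b) → (D.T (a + m) →ₗ[A] D.T (b + m))
  | 0, f => f
  | m + 1, f => D.stepH (a + m) (b + m) (stepHIter a b m f)

/-- The transition ring homomorphism
`End_{A/r}(r^{⊗ i}) → End_{A/r}(r^{⊗ (i+1)})`, `f ↦ id_r ⊗ f`. -/
def stepEnd (i : ℕ) : Module.End A (D.T i) →+* Module.End A (D.T i.succ) where
  toFun f := D.stepH i i f
  map_one' := D.stepH_id i
  map_mul' f g := D.stepH_comp i i i g f
  map_zero' := by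
    have h := D.stepH_add i i 0 0
    rw [add_zero] at h
    exact left_eq_add.mp h
  map_add' f g := D.stepH_add i i f g

end RadTensorTower

section AuxLemmas

variable {A : Type} [Ring A]

/-- The Jacobson radical is a two-sided ideal. -/
lemma ringRadical_mul_mem {x : A} (hx : x ∈ ringRadical A) (a : A) :
    x * a ∈ ringRadical A :=
  Ideal.mul_mem_right a _ hx

/-- Over an artinian ring, the quotient by the Jacobson radical is a semisimple module. -/
lemma isSemisimple_quotRadical [IsArtinianRing A] :
    IsSemisimpleModule A (A ⧸ ringRadical A) := by
  classical
  obtain ⟨t, ht, hinf⟩ : ∃ t : Finset (Ideal A), (∀ J ∈ t, J.IsMaximal)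
      ∧ t.inf id = ringRadical A := by
    set S : Set (Ideal A) :=
      {I | ∃ t : Finset (Ideal A), (∀ J ∈ t, J.IsMaximal) ∧ t.inf id = I} with hS
    obtain ⟨J₀, hJ₀, hmin⟩ := IsArtinian.set_has_minimal S ⟨⊤, ∅, by simp, by simp⟩
    obtain ⟨t, ht, htJ⟩ := hJ₀
    refine ⟨t, ht, htJ.trans ?_⟩
    have hle : ∀ m : Ideal A, m.IsMaximal → J₀ ≤ m := by
      intro m hm
      have hmem : J₀ ⊓ m ∈ S := by
        refine ⟨insert m t, ?_, ?_⟩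
        · intro J hJ
          rcases Finset.mem_insert.mp hJ with rfl | hJ
          exacts [hm, ht J hJ]
        · rw [Finset.inf_insert, htJ]
          exact inf_comm _ _
      have heq : J₀ ⊓ m = J₀ := by
        by_contra hne
        exact hmin _ hmem (inf_le_left.lt_of_ne hne)
      rw [← heq]
      exact inf_le_right
    have hjac : ringRadical A = sInf {J : Ideal A | ⊥ ≤ J ∧ J.IsMaximal} := rfl
    rw [hjac]
    refine le_antisymm ?_ ?_
    · exact le_sInf fun J hJ => hle J hJ.2
    · rw [← htJ]
      refine Finset.le_inf fun J hJ => ?_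
      show sInf {J : Ideal A | ⊥ ≤ J ∧ J.IsMaximal} ≤ J
      exact sInf_le ⟨bot_le, ht J hJ⟩
  let φ : A →ₗ[A] ((J : t) → A ⧸ (J : Ideal A)) :=
    LinearMap.pi fun J => ((J : Ideal A)).mkQ
  have hker : LinearMap.ker φ = ringRadical A := by
    rw [← hinf]
    ext x
    simp only [LinearMap.mem_ker, Submodule.mem_finsetInf, id]
    constructor
    · intro hx J hJ
      have h1 : ((J : Ideal A)).mkQ x = 0 := congr_fun hx ⟨J, hJ⟩
      rwa [← Submodule.ker_mkQ (p := (J : Ideal A)), LinearMap.mem_ker]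
    · intro hx
      funext J
      show ((J : Ideal A)).mkQ x = 0
      rw [← LinearMap.mem_ker, Submodule.ker_mkQ]
      exact hx J J.2
  haveI hsimp : ∀ J : t, IsSimpleModule A (A ⧸ (J : Ideal A)) := fun J =>
    isSimpleModule_iff_isCoatom.mpr (Ideal.isMaximal_def.mp (ht J J.2))
  haveI hcod : IsSemisimpleModule A ((J : t) → A ⧸ (J : Ideal A)) := by
    apply isSemisimpleModule_of_isSemisimpleModule_submodule
      (s := (Set.univ : Set t))
      (p := fun J : t => LinearMap.range (LinearMap.single A (fun J : t => A ⧸ (J : Ideal A)) J))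
    · intro J _
      exact IsSemisimpleModule.range _
    · simpa using LinearMap.iSup_range_single A (fun J : t => A ⧸ (J : Ideal A))
  have e1 : (A ⧸ ringRadical A) ≃ₗ[A] (A ⧸ LinearMap.ker φ) :=
    Submodule.quotEquivOfEq _ _ hker.symm
  haveI : IsSemisimpleModule A (A ⧸ LinearMap.ker φ) :=
    IsSemisimpleModule.congr (M := ↥(LinearMap.range φ)) φ.quotKerEquivRange
  exact IsSemisimpleModule.congr e1

/-- Any module killed by the radical over an artinian ring is semisimple. -/
lemma isSemisimpleModule_of_radkill [IsArtinianRing A] (N : Type) [AddCommGroup N]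
    [Module A N] (hN : ∀ a ∈ ringRadical A, ∀ x : N, a • x = 0) :
    IsSemisimpleModule A N := by
  haveI := isSemisimple_quotRadical (A := A)
  apply isSemisimpleModule_of_isSemisimpleModule_submodule (s := (Set.univ : Set N))
    (p := fun n => Submodule.span A {n})
  · intro n _
    have hle : ringRadical A ≤ LinearMap.ker (LinearMap.toSpanSingleton A N n) :=
      fun a ha => by
        simp only [LinearMap.mem_ker, LinearMap.toSpanSingleton_apply]
        exact hN a ha n
    have h1 : Submodule.span A {n}
        = LinearMap.range
            (Submodule.liftQ (ringRadical A) (LinearMap.toSpanSingleton A N n) hle) := by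
      rw [Submodule.range_liftQ, LinearMap.span_singleton_eq_range]
    rw [h1]
    exact IsSemisimpleModule.range _
  · rw [eq_top_iff]
    intro x _
    have : x ∈ ⨆ n : N, Submodule.span A {n} :=
      Submodule.mem_iSup_of_mem x (Submodule.mem_span_singleton_self x)
    simpa using this

/-- In a semisimple module, any nonzero element avoids some coatom. -/
lemma exists_coatom_not_mem {N : Type} [AddCommGroup N] [Module A N]
    [IsSemisimpleModule A N] {n : N} (hn : n ≠ 0) :
    ∃ W : Submodule A N, IsCoatom W ∧ n ∉ W := by
  obtain ⟨W, -, hWmax⟩ := zorn_le_nonempty₀ {W : Submodule A N | n ∉ W}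
    (fun c hc hchain y hy => by
      refine ⟨sSup c, fun hmem => ?_, fun z hz => le_sSup hz⟩
      obtain ⟨V, hVc, hnV⟩ :=
        (Submodule.mem_sSup_of_directed ⟨y, hy⟩ hchain.directedOn).mp hmem
      exact hc hVc hnV)
    ⊥ (by simpa using hn)
  have hnW : n ∉ W := hWmax.1
  have hmem : ∀ T : Submodule A N, W < T → n ∈ T := by
    intro T hT
    by_contra h
    exact hT.not_ge (hWmax.2 h hT.le)
  refine ⟨W, ⟨fun h => hnW (h ▸ Submodule.mem_top), ?_⟩, hnW⟩
  intro T hT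
  obtain ⟨C, hC⟩ := exists_isCompl W
  have hnWC : n ∈ W ⊔ C := by rw [hC.sup_eq_top]; exact Submodule.mem_top
  obtain ⟨w, hw, c, hcC, hn_eq⟩ := Submodule.mem_sup.mp hnWC
  have hcne : c ≠ 0 := by
    rintro rfl
    rw [add_zero] at hn_eq
    exact hnW (hn_eq ▸ hw)
  have hmincl : ∀ C' : Submodule A N, C' ≤ C → C' ≠ ⊥ → c ∈ C' := by
    intro C' hC'le hC'ne
    have hWC' : W < W ⊔ C' := by
      refine lt_of_le_of_ne le_sup_left fun h => ?_
      have h2 : C' ≤ W := by rw [h]; exact le_sup_right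
      exact hC'ne (le_bot_iff.mp (hC.disjoint h2 hC'le))
    have hnWC' : n ∈ W ⊔ C' := hmem _ hWC'
    have hcWC' : c ∈ W ⊔ C' := by
      have : c = n - w := by rw [← hn_eq]; abel
      rw [this]
      exact sub_mem hnWC' (Submodule.mem_sup_left hw)
    have hmod : (C' ⊔ W) ⊓ C = C' := by
      rw [sup_inf_assoc_of_le W hC'le, hC.inf_eq_bot, sup_bot_eq]
    have : c ∈ (C' ⊔ W) ⊓ C := ⟨by rwa [sup_comm C' W], hcC⟩
    rwa [hmod] at this
  have hCsimple : ∀ C' : Submodule A N, C' ≤ C → C' ≠ ⊥ → C' = C := by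
    intro C' hC'le hC'ne
    obtain ⟨E, hE⟩ := exists_isCompl C'
    have hsup : C' ⊔ E ⊓ C = C := by
      rw [← sup_inf_assoc_of_le E hC'le, hE.sup_eq_top, top_inf_eq]
    by_cases hD : E ⊓ C = ⊥
    · rw [← hsup, hD, sup_bot_eq]
    · exfalso
      have hc1 : c ∈ C' := hmincl C' hC'le hC'ne
      have hc2 : c ∈ E ⊓ C := hmincl _ inf_le_right hD
      have : c ∈ C' ⊓ E := ⟨hc1, hc2.1⟩
      rw [hE.inf_eq_bot] at this
      exact hcne this
  -- conclude T = ⊤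
  have hnT : n ∈ T := hmem T hT
  have hcT : c ∈ T := by
    have : c = n - w := by rw [← hn_eq]; abel
    rw [this]
    exact sub_mem hnT (hT.le hw)
  have hspan : Submodule.span A {c} = C :=
    hCsimple _ ((Submodule.span_singleton_le_iff_mem c C).mpr hcC)
      (by simpa [Submodule.span_singleton_eq_bot] using hcne)
  have hCleT : C ≤ T := by
    rw [← hspan]
    exact (Submodule.span_singleton_le_iff_mem c T).mpr hcT
  rw [eq_top_iff, ← hC.sup_eq_top]
  exact sup_le (le_of_lt hT) hCleT

/-- The key lemma: if every `β`-product with `n` vanishes, then `n = 0`. -/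
lemma beta_zero_imp_zero {A : Type} [Ring A] [IsArtinianRing A]
    (hrad : RadicalSquareZero A)
    (hnsp : ∀ (S : Type) [AddCommGroup S] [Module A S],
      IsSimpleModule A S → ¬ Module.Projective A S)
    (D : RadTensorTower A) (i : ℕ) (n : D.T i) (h0 : ∀ x, D.β i x n = 0) :
    n = 0 := by
  by_contra hn
  haveI hss : IsSemisimpleModule A (D.T i) :=
    isSemisimpleModule_of_radkill _ (D.radkill i)
  obtain ⟨W, hW, hnW⟩ := exists_coatom_not_mem (A := A) (n := n) hn
  haveI hSsimple : IsSimpleModule A (↥(D.T i) ⧸ W) :=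
    isSimpleModule_iff_isCoatom.mpr hW
  set s₀ : ↥(D.T i) ⧸ W := Submodule.Quotient.mk n with hs₀def
  have hs₀ : s₀ ≠ 0 := by
    simpa [hs₀def, Submodule.Quotient.mk_eq_zero] using hnW
  have hkills : ∀ a ∈ ringRadical A, ∀ s : ↥(D.T i) ⧸ W, a • s = 0 := by
    intro a ha s
    obtain ⟨m, rfl⟩ := Submodule.Quotient.mk_surjective W s
    rw [← Submodule.Quotient.mk_smul, D.radkill i a ha m]
    rfl
  have hsurj : Function.Surjective (LinearMap.toSpanSingleton A (↥(D.T i) ⧸ W) s₀) :=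
    IsSimpleModule.toSpanSingleton_surjective A hs₀
  set φ₀ := LinearMap.toSpanSingleton A (↥(D.T i) ⧸ W) s₀ with hφ₀def
  set K := LinearMap.ker φ₀ with hKdef
  clear_value s₀ φ₀ K
  have hrK : ringRadical A ≤ K := by
    intro x hx
    rw [hKdef, LinearMap.mem_ker, hφ₀def, LinearMap.toSpanSingleton_apply]
    exact hkills x hx s₀
  haveI hQss : IsSemisimpleModule A (A ⧸ ringRadical A) := isSemisimple_quotRadical
  set mkr := (ringRadical A).mkQ with hmkrdef
  set Kb := K.map mkr with hKbdef
  clear_value mkr Kb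
  obtain ⟨L, hL⟩ := exists_isCompl Kb
  have h1top : mkr 1 ∈ Kb ⊔ L := by rw [hL.sup_eq_top]; exact Submodule.mem_top
  obtain ⟨κ, hκ, lam, hlam, h1eq⟩ := Submodule.mem_sup.mp h1top
  rw [hKbdef] at hκ
  obtain ⟨k, hkK, hkκ⟩ := Submodule.mem_map.mp hκ
  set u : A := 1 - k with hudef
  have humk : mkr u ∈ L := by
    have h2 : mkr u = lam := by
      rw [hudef, map_sub, hkκ, ← h1eq]
      abel
    rw [h2]; exact hlam
  have hkmem : (1 : A) - u ∈ K := by simpa [hudef] using hkK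
  clear_value u
  have hmem_of_mk : ∀ a : A, mkr a ∈ Kb → mkr a ∈ L → a ∈ ringRadical A := by
    intro a ha1 ha2
    have h3 : mkr a ∈ Kb ⊓ L := ⟨ha1, ha2⟩
    rw [hL.inf_eq_bot, Submodule.mem_bot] at h3
    rwa [hmkrdef, ← LinearMap.mem_ker, Submodule.ker_mkQ] at h3
  have hzr : u * u - u ∈ ringRadical A := by
    apply hmem_of_mk
    · have h4 : u * u - u = -(u • ((1:A) - u)) := by
        rw [smul_eq_mul]; noncomm_ring
      rw [h4, map_neg, hKbdef]
      exact neg_mem (Submodule.mem_map_of_mem (Submodule.smul_mem _ u hkmem))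
    · have h5 : mkr (u * u - u) = u • mkr u - mkr u := by
        rw [map_sub, ← smul_eq_mul, map_smul]
      rw [h5]
      exact sub_mem (Submodule.smul_mem _ u humk) humk
  have hz2 : (u * u - u) * (u * u - u) = 0 := hrad _ hzr _ hzr
  set e : A := 3*(u*u) - 2*(u*(u*u)) with hedef
  clear_value e
  have he_idem : e * e = e := by
    have key : e * e - e = (u*u - u) * (u*u - u) * (4*(u*u) - 4*u - 3) := by
      rw [hedef]; noncomm_ring
    have h6 : e * e - e = 0 := by rw [key, hz2, zero_mul]
    exact sub_eq_zero.mp h6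
  have heur : e - u ∈ ringRadical A := by
    have h7 : e - u = (u*u - u) * (1 - 2*u) := by rw [hedef]; noncomm_ring
    rw [h7]
    exact ringRadical_mul_mem hzr _
  have h1eK : (1 : A) - e ∈ K := by
    have h8 : (1:A) - e = ((1:A) - u) - (e - u) := by abel
    rw [h8]
    exact sub_mem hkmem (hrK heur)
  have hφ₀app : ∀ a : A, φ₀ a = a • s₀ := fun a => by
    rw [hφ₀def, LinearMap.toSpanSingleton_apply]
  have hes₀ : e • s₀ = s₀ := by
    have h9 : e - 1 ∈ K := by
      have := neg_mem h1eK; simpa using this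
    have h10 : (e - 1) • s₀ = 0 := by
      rw [hKdef] at h9
      have := LinearMap.mem_ker.mp h9
      rwa [hφ₀app] at this
    have h11 : (e - 1) • s₀ = e • s₀ - (1:A) • s₀ := sub_smul e (1:A) s₀
    rw [one_smul] at h11
    rw [← sub_eq_zero, ← h11]
    exact h10
  have hKe : ∀ a ∈ K, a * e ∈ ringRadical A := by
    intro a ha
    apply hmem_of_mk
    · rw [hKbdef]
      apply Submodule.mem_map_of_mem
      show a * e ∈ K
      rw [hKdef, LinearMap.mem_ker, hφ₀app, mul_smul, hes₀]
      rw [hKdef] at ha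
      have := LinearMap.mem_ker.mp ha
      rwa [hφ₀app] at this
    · have h12 : a * e - a * u = a • (e - u) := by rw [smul_eq_mul, mul_sub]
      have h13 : a * e - a * u ∈ ringRadical A := by
        rw [h12]; exact Submodule.smul_mem _ a heur
      have h14 : mkr (a * e - a * u) = 0 := by
        have h15 : a * e - a * u ∈ LinearMap.ker mkr := by
          rw [hmkrdef, Submodule.ker_mkQ]; exact h13
        exact LinearMap.mem_ker.mp h15
      have h16 : mkr (a * e) = mkr (a * u) := by
        have := map_sub mkr (a*e) (a*u)
        rw [h14] at this
        exact (sub_eq_zero.mp this.symm)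
      rw [h16]
      have h17 : mkr (a * u) = a • mkr u := by rw [← smul_eq_mul, map_smul]
      rw [h17]
      exact Submodule.smul_mem _ a humk
  have hcmp : ∀ x ∈ ringRadical A, ∀ a a' : A, φ₀ a = φ₀ a' →
      x * (a * e) = x * (a' * e) := by
    intro x hx a a' hphi
    have haK : a - a' ∈ K := by
      rw [hKdef, LinearMap.mem_ker, map_sub, hphi, sub_self]
    have h18 : x * ((a - a') * e) = 0 := hrad x hx _ (hKe _ haK)
    have h19 : x * (a * e) - x * (a' * e) = x * ((a - a') * e) := by noncomm_ring
    exact sub_eq_zero.mp (h19.trans h18)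
  set sv : (↥(D.T i) ⧸ W) → A := Function.surjInv hsurj with hsvdef
  have hsv_eq : ∀ s, φ₀ (sv s) = s := fun s => Function.surjInv_eq hsurj s
  clear_value sv
  set γ : ringRadical A → D.T i → A :=
    fun x m => (x : A) * (sv (Submodule.Quotient.mk m) * e) with hγdef
  have hadd1 : ∀ x y (m : D.T i), γ (x + y) m = γ x m + γ y m := by
    intro x y m
    show ((x + y : ringRadical A) : A) * _ = _
    rw [Submodule.coe_add, add_mul]
  have hadd2 : ∀ x (m m' : D.T i), γ x (m + m') = γ x m + γ x m' := by
    intro x m m'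
    have h20 : φ₀ (sv (Submodule.Quotient.mk (m + m')))
        = φ₀ (sv (Submodule.Quotient.mk m) + sv (Submodule.Quotient.mk m')) := by
      rw [hsv_eq, map_add, hsv_eq, hsv_eq, Submodule.Quotient.mk_add]
    have h21 := hcmp (x : A) x.2 _ _ h20
    show (x : A) * (sv (Submodule.Quotient.mk (m + m')) * e) = _
    rw [h21, add_mul, mul_add]
  have hbal : ∀ (x : A) (hx : x ∈ ringRadical A) (a : A) (hxa : x * a ∈ ringRadical A)
      (m : D.T i), γ ⟨x * a, hxa⟩ m = γ ⟨x, hx⟩ (a • m) := by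
    intro x hx a hxa m
    have h22 : φ₀ (sv (Submodule.Quotient.mk (a • m)))
        = φ₀ (a * sv (Submodule.Quotient.mk m)) := by
      rw [hsv_eq]
      have h23 : φ₀ (a * sv (Submodule.Quotient.mk m))
          = a • φ₀ (sv (Submodule.Quotient.mk m)) := by
        rw [← smul_eq_mul, map_smul]
      rw [h23, hsv_eq, Submodule.Quotient.mk_smul]
    have h24 := hcmp x hx _ _ h22
    show (x * a) * (sv (Submodule.Quotient.mk m) * e)
        = (x : A) * (sv (Submodule.Quotient.mk (a • m)) * e)
    rw [h24, ← mul_assoc, ← mul_assoc, mul_assoc x a]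
  obtain ⟨h, hh, -⟩ := D.β_universal i A γ hadd1 hadd2 hbal
  have hre : ∀ x ∈ ringRadical A, x * e = 0 := by
    intro x hx
    have h25 : γ ⟨x, hx⟩ n = 0 := by rw [← hh ⟨x, hx⟩ n, h0, map_zero]
    have h26 : φ₀ (sv (Submodule.Quotient.mk n)) = φ₀ 1 := by
      rw [hsv_eq, hφ₀app, one_smul, hs₀def]
    have h27 := hcmp x hx _ 1 h26
    have h28 : (x : A) * (sv (Submodule.Quotient.mk n) * e) = 0 := h25
    rw [h27, one_mul] at h28
    exact h28
  have hKe0 : ∀ a ∈ K, a * e = 0 := by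
    intro a ha
    have h29 : a * e = (a * e) * e := by rw [mul_assoc, he_idem]
    rw [h29]
    exact hre _ (hKe a ha)
  have hwd : ∀ a a' : A, φ₀ a = φ₀ a' → a * e = a' * e := by
    intro a a' hphi
    have haK : a - a' ∈ K := by
      rw [hKdef, LinearMap.mem_ker, map_sub, hphi, sub_self]
    have h30 := hKe0 _ haK
    have h31 : a * e - a' * e = (a - a') * e := by noncomm_ring
    exact sub_eq_zero.mp (h31.trans h30)
  let σ : (↥(D.T i) ⧸ W) →ₗ[A] A :=
    { toFun := fun s => sv s * e
      map_add' := fun s s' => by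
        show sv (s + s') * e = sv s * e + sv s' * e
        have h32 : sv (s + s') * e = (sv s + sv s') * e :=
          hwd _ _ (by rw [hsv_eq, map_add, hsv_eq, hsv_eq])
        rw [h32, add_mul]
      map_smul' := fun a s => by
        show sv (a • s) * e = (RingHom.id A) a • (sv s * e)
        have h33 : φ₀ (sv (a • s)) = φ₀ (a * sv s) := by
          rw [hsv_eq, ← smul_eq_mul, map_smul, hsv_eq]
        have h34 := hwd _ _ h33
        simp only [RingHom.id_apply, smul_eq_mul]
        rw [h34, mul_assoc] }
  have hsplit : φ₀.comp σ = LinearMap.id := by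
    apply LinearMap.ext
    intro s
    simp only [LinearMap.comp_apply, LinearMap.id_apply]
    show φ₀ (sv s * e) = s
    have h35 : φ₀ (sv s * e) = sv s • φ₀ e := by rw [← smul_eq_mul, map_smul]
    have h36 : φ₀ e = e • s₀ := hφ₀app e
    have h37 : φ₀ (sv s) = sv s • s₀ := hφ₀app (sv s)
    rw [h35, h36, hes₀, ← h37, hsv_eq]
  have hproj : Module.Projective A (↥(D.T i) ⧸ W) :=
    Module.Projective.of_split σ φ₀ hsplit
  exact hnsp _ hSsimple hproj

end AuxLemmas

/-- Let `A` be an artin algebra with radical square zero and no simple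
projective modules.  Then for each `i ≥ 0` the algebra homomorphism
`End_{A/r}(r^{⊗ i}) → End_{A/r}(r^{⊗ (i+1)})` induced by the functor `r ⊗_{A/r} −`
(sending `f` to `id_r ⊗ f`) is injective. -/
theorem stepEnd_injective
    (R A : Type) [CommRing R] [IsArtinianRing R] [Ring A] [Algebra R A]
    [Module.Finite R A] (hrad : RadicalSquareZero A)
    (hnsp : ∀ (S : Type) [AddCommGroup S] [Module A S],
      IsSimpleModule A S → ¬ Module.Projective A S)
    (D : RadTensorTower A) (i : ℕ) :
    Function.Injective (D.stepEnd i) := by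
  haveI : IsArtinianRing A := IsArtinianRing.of_finite R A
  intro f g hfg
  have hsub : D.stepEnd i (f - g) = 0 := by rw [map_sub, hfg, sub_self]
  have hstep : D.stepH i i (f - g) = 0 := hsub
  have hzero : ∀ m : D.T i, (f - g) m = 0 := by
    intro m
    apply beta_zero_imp_zero hrad hnsp D i
    intro x
    have h1 := D.stepH_spec i i (f - g) x m
    rw [hstep] at h1
    simpa using h1.symm
  have h2 : f - g = 0 := LinearMap.ext fun m => by simpa using hzero m
  exact sub_eq_zero.mp h2
end
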